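/- For a simple connected graph G with n nodes and m edges, the sum over all edges (i,j) of the commute times C_{ij} equals 2m(n-1). -/
import Mathlib


open Finset

private lemma foster_pair_swap {V : Type*} [Fintype V] [DecidableEq V]
    (G : SimpleGraph V) [DecidableRel G.Adj] (g : V → V → ℝ) :
    ∑ i, ∑ k ∈ G.neighborFinset i, g i k = ∑ i, ∑ k ∈ G.neighborFinset i, g k i := by
  simp_rw [SimpleGraph.neighborFinset_eq_filter, sum_filter]
  rw [Finset.sum_comm]
  refine Finset.sum_congr rfl fun i _ => Finset.sum_congr rfl fun k _ => ?_
  exact if_congr (G.adj_comm k i) rfl rfl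

private lemma foster_swap {V : Type*} [Fintype V] [DecidableEq V]
    (G : SimpleGraph V) [DecidableRel G.Adj] (f : V → ℝ) :
    ∑ i, ∑ k ∈ G.neighborFinset i, f k = ∑ k, (G.degree k : ℝ) * f k := by
  rw [foster_pair_swap G (fun _ k => f k)]
  refine Finset.sum_congr rfl fun i _ => ?_
  rw [Finset.sum_const, SimpleGraph.degree, nsmul_eq_mul]

/-- the dart sum equals the edge sum of the symmetric lift -/
private lemma foster_dart_sum {V : Type*} [Fintype V] [DecidableEq V]
    (G : SimpleGraph V) [DecidableRel G.Adj] (T : V → V → ℝ) :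
    ∑ d : G.Dart, T d.fst d.snd
      = ∑ e ∈ G.edgeFinset,
          Sym2.lift ⟨fun i j => T i j + T j i, fun i j => by ring⟩ e := by
  rw [← Finset.sum_fiberwise_of_maps_to
    (g := SimpleGraph.Dart.edge) (t := G.edgeFinset)
    (fun d _ => by rw [SimpleGraph.mem_edgeFinset]; exact d.edge_mem)]
  refine Finset.sum_congr rfl fun e he => ?_
  rw [SimpleGraph.mem_edgeFinset] at he
  induction e with
  | _ u v =>
    let d : G.Dart := ⟨(u, v), he⟩
    have hfib : Finset.univ.filter (fun d' : G.Dart => d'.edge = d.edge) = {d, d.symm} :=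
      d.edge_fiber
    have : Finset.univ.filter (fun d' : G.Dart => d'.edge = s(u, v)) = {d, d.symm} := hfib
    rw [this, Finset.sum_pair d.symm_ne.symm]
    simp [d, SimpleGraph.Dart.symm]

private lemma foster_dart_sum' {V : Type*} [Fintype V] [DecidableEq V]
    (G : SimpleGraph V) [DecidableRel G.Adj] (T : V → V → ℝ) :
    ∑ d : G.Dart, T d.fst d.snd = ∑ i, ∑ k ∈ G.neighborFinset i, T i k := by
  rw [← Finset.sum_fiberwise_of_maps_to
    (g := fun d : G.Dart => d.fst) (t := Finset.univ) (fun d _ => Finset.mem_univ _)]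
  refine Finset.sum_congr rfl fun v _ => ?_
  have hfib : Finset.univ.filter (fun d : G.Dart => d.fst = v)
      = Finset.univ.image (G.dartOfNeighborSet v) := G.dart_fst_fiber v
  rw [hfib, Finset.sum_image (fun a _ b _ h => G.dartOfNeighborSet_injective v h)]
  rw [← Finset.sum_coe_sort (G.neighborFinset v) (fun k => T v k)]
  refine Fintype.sum_equiv
    (Equiv.subtypeEquivRight (fun k => by simp)) _ _ (fun k => rfl)

theorem foster_sum_commute_times {V : Type*} [Fintype V] [DecidableEq V]
    (G : SimpleGraph V) [DecidableRel G.Adj] (hG : G.Connected)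
    (T : V → V → ℝ)
    (hT0 : ∀ j, T j j = 0)
    (hT : ∀ i j, i ≠ j →
      (G.degree i : ℝ) * T i j = (G.degree i : ℝ) + ∑ k ∈ G.neighborFinset i, T k j) :
    ∑ e ∈ G.edgeFinset,
        Sym2.lift ⟨fun i j => T i j + T j i, fun i j => by ring⟩ e
      = 2 * (G.edgeFinset.card : ℝ) * ((Fintype.card V : ℝ) - 1) := by
  classical
  set m : ℝ := (G.edgeFinset.card : ℝ) with hm
  have hdegsum : ∑ v, (G.degree v : ℝ) = 2 * m := by
    rw [hm]
    exact_mod_cast congrArg (Nat.cast : ℕ → ℝ) G.sum_degrees_eq_twice_card_edges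
  -- key : for each j, the sum of T k j over neighbors k of j equals 2m - deg j
  have key : ∀ j, ∑ k ∈ G.neighborFinset j, T k j = 2 * m - (G.degree j : ℝ) := by
    intro j
    have h1 : ∑ i ∈ Finset.univ.erase j, ((G.degree i : ℝ) * T i j)
        = ∑ i ∈ Finset.univ.erase j, ((G.degree i : ℝ) + ∑ k ∈ G.neighborFinset i, T k j) :=
      Finset.sum_congr rfl fun i hi => hT i j (Finset.mem_erase.1 hi).1
    have e1 : ∑ i ∈ Finset.univ.erase j, ((G.degree i : ℝ) * T i j)
        = ∑ i, (G.degree i : ℝ) * T i j := by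
      rw [Finset.sum_erase_eq_sub (Finset.mem_univ j), hT0 j, mul_zero, sub_zero]
    have e2 : ∑ i ∈ Finset.univ.erase j, (G.degree i : ℝ)
        = 2 * m - (G.degree j : ℝ) := by
      rw [Finset.sum_erase_eq_sub (Finset.mem_univ j), hdegsum]
    have e3 : ∑ i ∈ Finset.univ.erase j, ∑ k ∈ G.neighborFinset i, T k j
        = ∑ i, (G.degree i : ℝ) * T i j - ∑ k ∈ G.neighborFinset j, T k j := by
      rw [Finset.sum_erase_eq_sub (Finset.mem_univ j), foster_swap G (fun k => T k j)]
    rw [e1, Finset.sum_add_distrib, e2, e3] at h1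
    linarith
  rw [← foster_dart_sum, foster_dart_sum', foster_pair_swap G (fun i k => T i k)]
  have : ∑ i, ∑ k ∈ G.neighborFinset i, T k i = ∑ i, (2 * m - (G.degree i : ℝ)) :=
    Finset.sum_congr rfl fun i _ => key i
  rw [this, Finset.sum_sub_distrib, Finset.sum_const, hdegsum, Finset.card_univ, nsmul_eq_mul]
  ring
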